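/- Let u be a subharmonic function on a neighborhood of the annulus A_ρ = {z ∈ ℂ : 1-ρ ≤ |z| ≤ 1+ρ}, and suppose u(z) ≤ S for all z with |z| = 1+ρ and u(z) ≥ γ for all z with |z| = 1+y₀, where 0 ≤ y₀ < ρ. Then ∫_𝕋 u(e^{2πi x}) dx ≥ (γ - α·S)/(1-α), where α = log(1+y₀)/log(1+ρ). -/

import Mathlib

/-- A function is subharmonic on a set if it is continuous there and satisfies the
sub-mean value inequality on every closed disc contained in the set. -/
def SubharmonicOn (u : ℂ → ℝ) (U : Set ℂ) : Prop :=
  ContinuousOn u U ∧ ∀ z : ℂ, ∀ r : ℝ, 0 < r → Metric.closedBall z r ⊆ U →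
    u z ≤ (2 * Real.pi)⁻¹ *
      ∫ θ in (0 : ℝ)..(2 * Real.pi), u (z + r * Complex.exp (θ * Complex.I))

open MeasureTheory Set Metric intervalIntegral

noncomputable section

namespace SubhAux

local notation "π" => Real.pi

/-- mean of `v` over the circle through `w` (parametrized multiplicatively), unnormalized -/
def cmc (v : ℂ → ℝ) (w : ℂ) : ℝ := ∫ θ in (0:ℝ)..(2*π), v (w * Complex.exp (θ * Complex.I))

/-- unnormalized circular mean -/
def cm (v : ℂ → ℝ) (r : ℝ) : ℝ := cmc v (r : ℂ)

lemma periodic_aux (v : ℂ → ℝ) (w : ℂ) :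
    Function.Periodic (fun θ : ℝ => v (w * Complex.exp (θ * Complex.I))) (2*π) := by
  intro θ
  simp only
  congr 2
  push_cast
  rw [add_mul, Complex.exp_add, Complex.exp_two_pi_mul_I, mul_one]

lemma cmc_eq_cm_abs (v : ℂ → ℝ) {w : ℂ} : cmc v w = cm v (‖w‖) := by
  set g : ℝ → ℝ := fun t : ℝ => v ((‖w‖ : ℂ) * Complex.exp (t * Complex.I)) with hg
  have key : ∀ θ : ℝ, w * Complex.exp (θ * Complex.I)
      = (‖w‖ : ℂ) * Complex.exp (((θ + w.arg : ℝ) : ℂ) * Complex.I) := by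
    intro θ
    conv_lhs => rw [← Complex.norm_mul_exp_arg_mul_I w]
    push_cast
    rw [add_mul, Complex.exp_add]
    ring
  have h1 : cmc v w = ∫ θ in (0:ℝ)..(2*π), g (θ + w.arg) := by
    unfold cmc
    congr 1
    ext θ
    rw [key θ]
  rw [h1, intervalIntegral.integral_comp_add_right g w.arg]
  have h2 := (periodic_aux v (‖w‖ : ℂ)).intervalIntegral_add_eq w.arg 0
  rw [zero_add] at h2
  rw [show (0:ℝ) + w.arg = w.arg by ring, show 2*π + w.arg = w.arg + 2*π by ring]
  exact h2

lemma cont_inner (v : ℂ → ℝ) (hv : Continuous v) :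
    Continuous (Function.uncurry fun (r θ : ℝ) => v ((r:ℂ) * Complex.exp (θ * Complex.I))) := by
  apply hv.comp
  fun_prop

lemma cont_cm (v : ℂ → ℝ) (hv : Continuous v) : Continuous fun r : ℝ => cm v r := by
  have := intervalIntegral.continuous_parametric_intervalIntegral_of_continuous'
    (μ := volume) (cont_inner v hv) 0 (2*π)
  exact this


lemma cont_log_circle {r ε : ℝ} (hε : 0 < ε) (hεr : ε < r) :
    Continuous fun θ : ℝ => Complex.log (circleMap (r:ℂ) ε θ) := by
  rw [continuous_iff_continuousAt]
  intro θ
  refine (continuousAt_clog ?_).comp (continuous_circleMap _ _).continuousAt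
  have h1 : ‖circleMap (r:ℂ) ε θ - r‖ ≤ ε := by
    rw [circleMap_sub_center]
    simp [circleMap, abs_of_pos hε]
  have h2 := (abs_le.1 ((Complex.abs_re_le_norm _).trans h1)).1
  simp only [Complex.sub_re, Complex.ofReal_re] at h2
  exact Complex.mem_slitPlane_iff.2 (Or.inl (by linarith))

lemma log_mean {r ε : ℝ} (hε : 0 < ε) (hεr : ε < r) :
    (∫ ψ in (0:ℝ)..(2*π),
        Real.log (‖(r:ℂ) + (ε:ℂ) * Complex.exp ((ψ:ℂ) * Complex.I)‖))
      = 2 * π * Real.log r := by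
  have hr : 0 < r := hε.trans hεr
  have hd : DifferentiableOn ℂ Complex.log (closedBall (r:ℂ) ε) := by
    intro z hz
    refine (Complex.differentiableAt_log ?_).differentiableWithinAt
    have h1 : ‖z - r‖ ≤ ε := by
      simpa [Metric.mem_closedBall, Complex.dist_eq] using hz
    have h2 := (abs_le.1 ((Complex.abs_re_le_norm _).trans h1)).1
    simp only [Complex.sub_re, Complex.ofReal_re] at h2
    exact Complex.mem_slitPlane_iff.2 (Or.inl (by linarith))
  have hc := DifferentiableOn.circleIntegral_sub_inv_smul hd (Metric.mem_ball_self hε)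
  rw [circleIntegral] at hc
  have heq : ∀ θ : ℝ, deriv (circleMap (r:ℂ) ε) θ •
        ((circleMap (r:ℂ) ε θ - (r:ℂ))⁻¹ • Complex.log (circleMap (r:ℂ) ε θ))
      = Complex.I • Complex.log (circleMap (r:ℂ) ε θ) := by
    intro θ
    rw [deriv_circleMap, circleMap_sub_center, smul_eq_mul, smul_eq_mul, smul_eq_mul]
    have hne : circleMap 0 ε θ ≠ 0 := by
      simpa using circleMap_ne_center (c := (0:ℂ)) (R := ε) hε.ne' (θ := θ)
    field_simp
  rw [intervalIntegral.integral_congr (g := fun θ : ℝ =>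
      Complex.I • Complex.log (circleMap (r:ℂ) ε θ)) (fun θ _ => heq θ),
    intervalIntegral.integral_smul] at hc
  have hX : (∫ θ in (0:ℝ)..(2*π), Complex.log (circleMap (r:ℂ) ε θ))
      = ((2 * π : ℝ) : ℂ) * Complex.log (r:ℂ) := by
    apply mul_left_cancel₀ Complex.I_ne_zero
    rw [← smul_eq_mul, hc, smul_eq_mul]
    push_cast
    ring
  have hint : IntervalIntegrable (fun θ : ℝ => Complex.log (circleMap (r:ℂ) ε θ))
      volume 0 (2*π) := (cont_log_circle hε hεr).intervalIntegrable _ _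
  have hre : (∫ ψ in (0:ℝ)..(2*π),
        Real.log (‖(r:ℂ) + (ε:ℂ) * Complex.exp ((ψ:ℂ) * Complex.I)‖))
      = Complex.reCLM (∫ θ in (0:ℝ)..(2*π), Complex.log (circleMap (r:ℂ) ε θ)) := by
    rw [← ContinuousLinearMap.intervalIntegral_comp_comm _ hint]
    apply intervalIntegral.integral_congr
    intro θ _
    simp [Complex.log_re, circleMap]
  rw [hre, hX, ← Complex.ofReal_log hr.le]
  simp


lemma periodic_aux2 (v : ℂ → ℝ) (c : ℂ) (ε : ℝ) :
    Function.Periodic (fun θ : ℝ => v (c + ε * Complex.exp (θ * Complex.I))) (2*π) := by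
  intro θ
  simp only
  congr 3
  push_cast
  rw [add_mul, Complex.exp_add, Complex.exp_two_pi_mul_I, mul_one]

lemma swap_aux {H : ℝ → ℝ → ℝ} (hH : Continuous (Function.uncurry H)) {a b : ℝ} (hab : a ≤ b) :
    (∫ x in a..b, ∫ y in a..b, H x y) = ∫ y in a..b, ∫ x in a..b, H x y := by
  simp only [intervalIntegral.integral_of_le hab]
  apply MeasureTheory.integral_integral_swap
  rw [MeasureTheory.Measure.prod_restrict]
  exact (hH.continuousOn.integrableOn_compact (isCompact_Icc.prod isCompact_Icc)).mono_set
    (Set.prod_mono Set.Ioc_subset_Icc_self Set.Ioc_subset_Icc_self)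

lemma cm_submean (v : ℂ → ℝ) (hv : Continuous v) {A : Set ℂ}
    (hsubA : ∀ z : ℂ, ∀ ε : ℝ, 0 < ε → closedBall z ε ⊆ A →
      v z ≤ (2*π)⁻¹ * ∫ θ in (0:ℝ)..(2*π), v (z + ε * Complex.exp (θ * Complex.I)))
    {r ε : ℝ} (hε : 0 < ε)
    (hball : ∀ φ : ℝ, closedBall ((r:ℂ) * Complex.exp ((φ:ℂ) * Complex.I)) ε ⊆ A) :
    cm v r ≤ (2*π)⁻¹ * ∫ ψ in (0:ℝ)..(2*π),
      cm v (‖(r:ℂ) + (ε:ℂ) * Complex.exp ((ψ:ℂ) * Complex.I)‖) := by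
  have hπ : (0:ℝ) < 2*π := by positivity
  set G : ℝ → ℝ → ℝ := fun φ ψ =>
    v (((r:ℂ) + (ε:ℂ) * Complex.exp ((ψ:ℂ) * Complex.I)) * Complex.exp ((φ:ℂ) * Complex.I))
    with hGdef
  have hGcont : Continuous (Function.uncurry G) := by
    apply hv.comp
    fun_prop
  -- step 2 : inner rewriting
  have step2 : ∀ φ : ℝ, (∫ θ in (0:ℝ)..(2*π),
        v ((r:ℂ) * Complex.exp ((φ:ℂ) * Complex.I) + ε * Complex.exp ((θ:ℂ) * Complex.I)))
      = ∫ ψ in (0:ℝ)..(2*π), G φ ψ := by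
    intro φ
    set h2 : ℝ → ℝ := fun θ =>
      v ((r:ℂ) * Complex.exp ((φ:ℂ) * Complex.I) + ε * Complex.exp ((θ:ℂ) * Complex.I)) with hh2
    have key : ∀ ψ : ℝ, G φ ψ = h2 (ψ + φ) := by
      intro ψ
      simp only [hGdef, hh2]
      congr 1
      push_cast
      rw [show ((ψ : ℂ) + (φ : ℂ)) * Complex.I
          = (ψ:ℂ) * Complex.I + (φ:ℂ) * Complex.I from by ring, Complex.exp_add]
      ring
    calc (∫ θ in (0:ℝ)..(2*π), h2 θ)
        = ∫ θ in (0:ℝ)+φ..(2*π)+φ, h2 θ := by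
          have := (periodic_aux2 v ((r:ℂ) * Complex.exp ((φ:ℂ) * Complex.I)) ε).intervalIntegral_add_eq 0 φ
          rw [zero_add] at this
          rw [show (0:ℝ)+φ = φ by ring, show 2*π+φ = φ+2*π by ring]
          exact this
      _ = ∫ ψ in (0:ℝ)..(2*π), h2 (ψ + φ) := (intervalIntegral.integral_comp_add_right h2 φ).symm
      _ = ∫ ψ in (0:ℝ)..(2*π), G φ ψ := by
          apply intervalIntegral.integral_congr
          intro ψ _
          exact (key ψ).symm
  -- step 3 : integrate the submean inequality over φ
  have step3 : cm v r ≤ (2*π)⁻¹ * ∫ φ in (0:ℝ)..(2*π), ∫ ψ in (0:ℝ)..(2*π), G φ ψ := by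
    have hmono : (∫ φ in (0:ℝ)..(2*π), v ((r:ℂ) * Complex.exp ((φ:ℂ) * Complex.I)))
        ≤ ∫ φ in (0:ℝ)..(2*π), (2*π)⁻¹ * ∫ ψ in (0:ℝ)..(2*π), G φ ψ := by
      apply intervalIntegral.integral_mono_on hπ.le
      · exact ((cont_inner v hv).comp (by fun_prop : Continuous fun φ : ℝ => ((r:ℝ), φ))).intervalIntegrable _ _
      · apply Continuous.intervalIntegrable
        exact continuous_const.mul
          (intervalIntegral.continuous_parametric_intervalIntegral_of_continuous' hGcont 0 (2*π))
      · intro φ _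
        calc v ((r:ℂ) * Complex.exp ((φ:ℂ) * Complex.I))
            ≤ (2*π)⁻¹ * ∫ θ in (0:ℝ)..(2*π),
                v ((r:ℂ) * Complex.exp ((φ:ℂ) * Complex.I) + ε * Complex.exp ((θ:ℂ) * Complex.I)) :=
              hsubA _ ε hε (hball φ)
          _ = (2*π)⁻¹ * ∫ ψ in (0:ℝ)..(2*π), G φ ψ := by rw [step2 φ]
    rw [intervalIntegral.integral_const_mul] at hmono
    exact hmono
  -- step 4+5 : swap and identify inner integral with circular means
  have step45 : (∫ φ in (0:ℝ)..(2*π), ∫ ψ in (0:ℝ)..(2*π), G φ ψ)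
      = ∫ ψ in (0:ℝ)..(2*π),
          cm v (‖(r:ℂ) + (ε:ℂ) * Complex.exp ((ψ:ℂ) * Complex.I)‖) := by
    rw [swap_aux hGcont hπ.le]
    apply intervalIntegral.integral_congr
    intro ψ _
    exact cmc_eq_cm_abs v
  calc cm v r ≤ (2*π)⁻¹ * ∫ φ in (0:ℝ)..(2*π), ∫ ψ in (0:ℝ)..(2*π), G φ ψ := step3
    _ = _ := by rw [step45]


lemma integral_lt_of_lt_at_left {f : ℝ → ℝ} {K a b : ℝ} (hf : Continuous f) (hab : a < b)
    (hle : ∀ x ∈ Icc a b, f x ≤ K) (hlt : f a < K) :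
    (∫ x in a..b, f x) < (b - a) * K := by
  set η : ℝ := (K - f a)/2 with hηdef
  have hη : 0 < η := by simp only [hηdef]; linarith
  obtain ⟨δ, hδ, hδ2⟩ := Metric.continuousAt_iff.1 hf.continuousAt η hη
  set c : ℝ := min (a + δ/2) b with hcdef
  have hc1 : a < c := lt_min (by linarith) hab
  have hc2 : c ≤ b := min_le_right _ _
  have hfc : ∀ x ∈ Icc a c, f x ≤ K - η := by
    intro x hx
    have hd : dist x a < δ := by
      rw [Real.dist_eq, abs_of_nonneg (by linarith [hx.1])]
      have : x ≤ a + δ/2 := hx.2.trans (min_le_left _ _)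
      linarith
    have := hδ2 hd
    rw [Real.dist_eq, abs_lt] at this
    simp only [hηdef]
    linarith [this.2]
  have hi1 : (∫ x in a..c, f x) ≤ (c - a) * (K - η) := by
    calc (∫ x in a..c, f x) ≤ ∫ _x in a..c, (K - η) :=
          intervalIntegral.integral_mono_on hc1.le (hf.intervalIntegrable _ _)
            (intervalIntegrable_const) hfc
      _ = (c - a) * (K - η) := by rw [intervalIntegral.integral_const, smul_eq_mul]
  have hi2 : (∫ x in c..b, f x) ≤ (b - c) * K := by
    calc (∫ x in c..b, f x) ≤ ∫ _x in c..b, K :=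
          intervalIntegral.integral_mono_on hc2 (hf.intervalIntegrable _ _)
            (intervalIntegrable_const) (fun x hx => hle x ⟨hc1.le.trans hx.1, hx.2⟩)
      _ = (b - c) * K := by rw [intervalIntegral.integral_const, smul_eq_mul]
  have hsplit : (∫ x in a..b, f x) = (∫ x in a..c, f x) + ∫ x in c..b, f x :=
    (intervalIntegral.integral_add_adjacent_intervals (hf.intervalIntegrable _ _)
      (hf.intervalIntegrable _ _)).symm
  rw [hsplit]
  nlinarith [hi1, hi2, hc1, hη]

lemma cm_convex (v : ℂ → ℝ) (hv : Continuous v) {ρ : ℝ} (hρ : 0 < ρ)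
    (hsubA : ∀ z : ℂ, ∀ ε : ℝ, 0 < ε →
      closedBall z ε ⊆ {z : ℂ | 1 - ρ ≤ ‖z‖ ∧ ‖z‖ ≤ 1 + ρ} →
      v z ≤ (2*π)⁻¹ * ∫ θ in (0:ℝ)..(2*π), v (z + ε * Complex.exp (θ * Complex.I)))
    {t : ℝ} (ht0 : 0 ≤ t) (htT : t ≤ Real.log (1+ρ)) :
    cm v (Real.exp t) ≤ cm v 1
      + (t / Real.log (1+ρ)) * (cm v (1+ρ) - cm v 1) := by
  have hπ : (0:ℝ) < 2*π := by positivity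
  set T : ℝ := Real.log (1+ρ) with hTdef
  have hT : 0 < T := Real.log_pos (by linarith)
  set a : ℝ := cm v 1 with hadef
  set c : ℝ := cm v (1+ρ) - cm v 1 with hcdef
  set N : ℝ → ℝ := fun t => cm v (Real.exp t) - a - (c/T) * t with hNdef
  have hNcont : Continuous N := by
    apply Continuous.sub
    apply Continuous.sub
    · exact (cont_cm v hv).comp Real.continuous_exp
    · exact continuous_const
    · exact continuous_const.mul continuous_id
  have hN0 : N 0 = 0 := by simp [hNdef, Real.exp_zero, hadef]
  have hNT : N T = 0 := by
    have : Real.exp T = 1 + ρ := Real.exp_log (by linarith)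
    simp only [hNdef, this]
    field_simp
    rw [hcdef, hadef]; ring
  -- It suffices to show N t ≤ 0.
  rw [show cm v 1 + (t / T) * (cm v (1+ρ) - cm v 1) = a + (c/T) * t from by ring]
  by_contra hcon
  push_neg at hcon
  have hNt : 0 < N t := by simp only [hNdef]; linarith
  obtain ⟨s₀, hs₀mem, hs₀max⟩ := isCompact_Icc.exists_isMaxOn (s := Icc 0 T)
    (Set.nonempty_Icc.2 hT.le) hNcont.continuousOn
  set K : ℝ := N s₀ with hKdef
  have hK : 0 < K := hNt.trans_le (hs₀max ⟨ht0, htT⟩)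
  set E : Set ℝ := Icc 0 T ∩ N ⁻¹' {K} with hEdef
  have hEcomp : IsCompact E := isCompact_Icc.inter_right ((isClosed_singleton).preimage hNcont)
  have hEne : E.Nonempty := ⟨s₀, hs₀mem, rfl⟩
  set s : ℝ := sSup E with hsdef
  have hsE : s ∈ E := hEcomp.sSup_mem hEne
  have hsIcc : s ∈ Icc 0 T := hsE.1
  have hNs : N s = K := hsE.2
  have hs0 : 0 < s := by
    rcases eq_or_lt_of_le hsIcc.1 with h | h
    · exfalso; rw [← h] at hNs; rw [hN0] at hNs; linarith
    · exact h
  have hsT : s < T := by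
    rcases eq_or_lt_of_le hsIcc.2 with h | h
    · exfalso; rw [h] at hNs; rw [hNT] at hNs; linarith
    · exact h
  set r : ℝ := Real.exp s with hrdef
  have hr1 : 1 < r := by
    rw [hrdef, show (1:ℝ) = Real.exp 0 from Real.exp_zero.symm]
    exact Real.exp_lt_exp.2 hs0
  have hr2 : r < 1 + ρ := by
    rw [hrdef, show (1+ρ : ℝ) = Real.exp T from (Real.exp_log (by linarith)).symm]
    exact Real.exp_lt_exp.2 hsT
  set ε : ℝ := min ((r-1)/2) ((1+ρ-r)/2) with hεdef
  have hε : 0 < ε := lt_min (by linarith) (by linarith)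
  have hεr1 : ε < r - 1 := (min_le_left _ _).trans_lt (by linarith)
  have hεr2 : r + ε < 1 + ρ := by
    have := min_le_right ((r-1)/2) ((1+ρ-r)/2)
    simp only [← hεdef] at this
    linarith
  have hεr : ε < r := by linarith
  -- bounds on the modulus of the perturbed points
  have hnr : ‖((r:ℝ):ℂ)‖ = r := by
    rw [Complex.norm_real, Real.norm_eq_abs, abs_of_pos (by linarith : (0:ℝ) < r)]
  have hne' : ∀ ψ : ℝ, ‖(ε:ℂ) * Complex.exp ((ψ:ℂ) * Complex.I)‖ = ε := by
    intro ψ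
    rw [norm_mul, Complex.norm_real, Real.norm_eq_abs,
      Complex.norm_exp_ofReal_mul_I, mul_one, abs_of_pos hε]
  have habs_lb : ∀ ψ : ℝ, r - ε ≤ ‖(r:ℂ) + (ε:ℂ) * Complex.exp ((ψ:ℂ) * Complex.I)‖ := by
    intro ψ
    have h1 := norm_add_le ((r:ℂ) + (ε:ℂ) * Complex.exp ((ψ:ℂ) * Complex.I))
      (-((ε:ℂ) * Complex.exp ((ψ:ℂ) * Complex.I)))
    rw [show ((r:ℂ) + (ε:ℂ) * Complex.exp ((ψ:ℂ) * Complex.I))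
        + -((ε:ℂ) * Complex.exp ((ψ:ℂ) * Complex.I)) = ((r:ℝ):ℂ) from by ring, hnr, norm_neg,
      hne'] at h1
    linarith
  have habs_ub : ∀ ψ : ℝ, ‖(r:ℂ) + (ε:ℂ) * Complex.exp ((ψ:ℂ) * Complex.I)‖ ≤ r + ε := by
    intro ψ
    have h1 := norm_add_le ((r:ℂ)) ((ε:ℂ) * Complex.exp ((ψ:ℂ) * Complex.I))
    rw [hnr, hne'] at h1
    exact h1
  -- the closed balls are inside the annulus
  have hball : ∀ φ : ℝ, closedBall ((r:ℂ) * Complex.exp ((φ:ℂ) * Complex.I)) ε ⊆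
      {z : ℂ | 1 - ρ ≤ ‖z‖ ∧ ‖z‖ ≤ 1 + ρ} := by
    intro φ z hz
    rw [Metric.mem_closedBall, Complex.dist_eq] at hz
    have hcabs : ‖(r:ℂ) * Complex.exp ((φ:ℂ) * Complex.I)‖ = r := by
      rw [norm_mul, Complex.norm_real, Real.norm_eq_abs,
        Complex.norm_exp_ofReal_mul_I, mul_one, abs_of_pos (by linarith : (0:ℝ) < r)]
    constructor
    · have h1 := norm_sub_norm_le ((r:ℂ) * Complex.exp ((φ:ℂ) * Complex.I)) z
      rw [norm_sub_rev, hcabs] at h1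
      linarith
    · have h1 := norm_sub_norm_le z ((r:ℂ) * Complex.exp ((φ:ℂ) * Complex.I))
      rw [hcabs] at h1
      linarith
  -- the submean inequality for the means
  have hsm := cm_submean v hv hsubA hε hball
  -- continuity facts
  have hwcont : Continuous fun ψ : ℝ =>
      ‖(r:ℂ) + (ε:ℂ) * Complex.exp ((ψ:ℂ) * Complex.I)‖ :=
    continuous_norm.comp (by fun_prop)
  have hlogcont : Continuous fun ψ : ℝ =>
      Real.log (‖(r:ℂ) + (ε:ℂ) * Complex.exp ((ψ:ℂ) * Complex.I)‖) := by
    rw [continuous_iff_continuousAt]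
    intro ψ
    exact (Real.continuousAt_log (by linarith [habs_lb ψ])).comp hwcont.continuousAt
  set g : ℝ → ℝ := fun ψ =>
    N (Real.log (‖(r:ℂ) + (ε:ℂ) * Complex.exp ((ψ:ℂ) * Complex.I)‖)) with hgdef
  have hgcont : Continuous g := hNcont.comp hlogcont
  -- express N s bound via g
  have hlog_in : ∀ ψ : ℝ,
      Real.log (‖(r:ℂ) + (ε:ℂ) * Complex.exp ((ψ:ℂ) * Complex.I)‖) ∈ Icc 0 T := by
    intro ψ
    constructor
    · apply Real.log_nonneg
      linarith [habs_lb ψ]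
    · rw [hTdef]
      apply Real.log_le_log (by linarith [habs_lb ψ])
      linarith [habs_ub ψ]
  have hg_eq : ∀ ψ : ℝ, g ψ =
      cm v (‖(r:ℂ) + (ε:ℂ) * Complex.exp ((ψ:ℂ) * Complex.I)‖) - a
        - (c/T) * Real.log (‖(r:ℂ) + (ε:ℂ) * Complex.exp ((ψ:ℂ) * Complex.I)‖) := by
    intro ψ
    simp only [hgdef, hNdef]
    rw [Real.exp_log (by linarith [habs_lb ψ])]
  have hint_g : (∫ ψ in (0:ℝ)..(2*π), g ψ)
      = (∫ ψ in (0:ℝ)..(2*π),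
          cm v (‖(r:ℂ) + (ε:ℂ) * Complex.exp ((ψ:ℂ) * Complex.I)‖))
        - 2*π*a - (c/T) * (2*π*Real.log r) := by
    have e1 : (∫ ψ in (0:ℝ)..(2*π), g ψ)
        = ∫ ψ in (0:ℝ)..(2*π),
            (cm v (‖(r:ℂ) + (ε:ℂ) * Complex.exp ((ψ:ℂ) * Complex.I)‖) - a
              - (c/T) * Real.log (‖(r:ℂ) + (ε:ℂ) * Complex.exp ((ψ:ℂ) * Complex.I)‖)) :=
      intervalIntegral.integral_congr (fun ψ _ => hg_eq ψ)
    rw [e1]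
    rw [intervalIntegral.integral_sub, intervalIntegral.integral_sub]
    · rw [intervalIntegral.integral_const, intervalIntegral.integral_const_mul, log_mean hε hεr]
      simp only [smul_eq_mul]
      ring
    · exact ((cont_cm v hv).comp hwcont).intervalIntegrable _ _
    · exact intervalIntegrable_const
    · exact (((cont_cm v hv).comp hwcont).sub continuous_const).intervalIntegrable _ _
    · exact (continuous_const.mul hlogcont).intervalIntegrable _ _
  have hKle : K ≤ (2*π)⁻¹ * ∫ ψ in (0:ℝ)..(2*π), g ψ := by
    have hNs_eq : N s = cm v r - a - (c/T) * s := by simp only [hNdef, hrdef]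
    have hslog : Real.log r = s := by rw [hrdef, Real.log_exp]
    rw [← hNs, hNs_eq, hint_g, hslog]
    have := hsm
    rw [mul_sub, mul_sub]
    have h2πa : (2*π)⁻¹ * (2*π*a) = a := by field_simp
    have h2πs : (2*π)⁻¹ * ((c/T) * (2*π*s)) = (c/T) * s := by field_simp
    rw [h2πa, h2πs]
    linarith [hsm]
  -- strictness
  have hgle : ∀ ψ ∈ Icc (0:ℝ) (2*π), g ψ ≤ K := by
    intro ψ _
    exact hs₀max (hlog_in ψ)
  have hg0 : g 0 < K := by
    have habs0 : ‖(r:ℂ) + (ε:ℂ) * Complex.exp (((0:ℝ):ℂ) * Complex.I)‖ = r + ε := by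
      rw [Complex.ofReal_zero, zero_mul, Complex.exp_zero, mul_one,
        show ((r:ℂ) + (ε:ℂ)) = ((r + ε : ℝ) : ℂ) from by push_cast; ring, Complex.norm_real, Real.norm_eq_abs,
        abs_of_pos (by linarith : (0:ℝ) < r + ε)]
    have ht0' : Real.log (r + ε) ∈ Icc (0:ℝ) T := by
      have := hlog_in 0
      rwa [habs0] at this
    have hgt : s < Real.log (r + ε) := by
      have : Real.log r < Real.log (r + ε) := Real.log_lt_log (by linarith) (by linarith)
      rwa [hrdef, Real.log_exp] at this
    have hne : N (Real.log (r + ε)) ≠ K := by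
      intro heq
      have hmem : Real.log (r + ε) ∈ E := ⟨ht0', heq⟩
      have : Real.log (r + ε) ≤ s := le_csSup hEcomp.bddAbove hmem
      linarith
    have hle' : N (Real.log (r + ε)) ≤ K := hs₀max ht0'
    have hlt' : N (Real.log (r + ε)) < K := lt_of_le_of_ne hle' hne
    have hg0eq : g 0 = N (Real.log (r + ε)) := by
      simp only [hgdef]
      rw [habs0]
    rw [hg0eq]
    exact hlt'
  have hstrict := integral_lt_of_lt_at_left hgcont hπ (fun x hx => hgle x hx) hg0
  rw [sub_zero] at hstrict
  have : K ≤ (2*π)⁻¹ * ∫ ψ in (0:ℝ)..(2*π), g ψ := hKle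
  have hfin : (2*π)⁻¹ * (∫ ψ in (0:ℝ)..(2*π), g ψ) < (2*π)⁻¹ * (2*π*K) := by
    apply mul_lt_mul_of_pos_left _ (by positivity)
    linarith [hstrict]
  have h2πK : (2*π)⁻¹ * (2*π*K) = K := by field_simp
  rw [h2πK] at hfin
  linarith

end SubhAux

set_option maxHeartbeats 1000000 in
open SubhAux in
/-- Subharmonic estimate: if `u` is subharmonic on a neighborhood of the annulus
`A_ρ = {1-ρ ≤ |z| ≤ 1+ρ}`, `u ≤ S` on the circle `|z| = 1+ρ` and `u ≥ γ` on the
circle `|z| = 1+y₀` with `0 ≤ y₀ < ρ`, then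
`∫_𝕋 u ≥ (γ - α S)/(1-α)` where `α = log(1+y₀)/log(1+ρ)`. -/
theorem subharmonic_mean_estimate {ρ y₀ S γ : ℝ} (hρ : 0 < ρ)
    (hy₀ : 0 ≤ y₀) (hy₀ρ : y₀ < ρ)
    (u : ℂ → ℝ) (U : Set ℂ) (hUopen : IsOpen U)
    (hU : {z : ℂ | 1 - ρ ≤ ‖z‖ ∧ ‖z‖ ≤ 1 + ρ} ⊆ U)
    (hsub : SubharmonicOn u U)
    (hS : ∀ z : ℂ, ‖z‖ = 1 + ρ → u z ≤ S)
    (hγ : ∀ z : ℂ, ‖z‖ = 1 + y₀ → γ ≤ u z) :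
    (γ - (Real.log (1 + y₀) / Real.log (1 + ρ)) * S) /
        (1 - Real.log (1 + y₀) / Real.log (1 + ρ)) ≤
      ∫ x in (0 : ℝ)..1, u (Complex.exp (2 * Real.pi * x * Complex.I)) := by
  obtain ⟨hcont, hsub2⟩ := hsub
  have hπ : (0:ℝ) < 2*Real.pi := by positivity
  set A : Set ℂ := {z : ℂ | 1 - ρ ≤ ‖z‖ ∧ ‖z‖ ≤ 1 + ρ} with hAdef
  have hAclosed : IsClosed A := by
    have : A = (fun z : ℂ => ‖z‖) ⁻¹' (Icc (1-ρ) (1+ρ)) := by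
      ext z; simp [hAdef, Set.mem_Icc]
    rw [this]
    exact isClosed_Icc.preimage continuous_norm
  have hcontA : ContinuousOn u A := hcont.mono hU
  obtain ⟨g, hg⟩ := ContinuousMap.exists_restrict_eq (Y := ℝ) hAclosed
    ⟨A.restrict u, hcontA.restrict⟩
  set v : ℂ → ℝ := ⇑g with hvdef
  have hv : Continuous v := g.continuous
  have hveq : ∀ z ∈ A, v z = u z := fun z hz => ContinuousMap.congr_fun hg ⟨z, hz⟩
  have hsubA : ∀ z : ℂ, ∀ ε : ℝ, 0 < ε →
      Metric.closedBall z ε ⊆ A →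
      v z ≤ (2*Real.pi)⁻¹ * ∫ θ in (0:ℝ)..(2*Real.pi), v (z + ε * Complex.exp (θ * Complex.I)) := by
    intro z ε hε hsubset
    have hzA : z ∈ A := hsubset (Metric.mem_closedBall_self hε.le)
    have h1 := hsub2 z ε hε (hsubset.trans hU)
    rw [hveq z hzA]
    refine h1.trans (le_of_eq ?_)
    congr 1
    apply intervalIntegral.integral_congr
    intro θ _
    have hmem : z + (ε:ℂ) * Complex.exp ((θ:ℂ) * Complex.I) ∈ Metric.closedBall z ε := by
      rw [Metric.mem_closedBall, Complex.dist_eq, add_sub_cancel_left, norm_mul,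
        Complex.norm_exp_ofReal_mul_I, mul_one, Complex.norm_real, Real.norm_eq_abs, abs_of_pos hε]
    exact (hveq _ (hsubset hmem)).symm
  -- abbreviations
  set T : ℝ := Real.log (1 + ρ) with hTdef
  have hT : 0 < T := Real.log_pos (by linarith)
  set t₀ : ℝ := Real.log (1 + y₀) with ht₀def
  have ht0 : 0 ≤ t₀ := Real.log_nonneg (by linarith)
  have htT : t₀ ≤ T := Real.log_le_log (by linarith) (by linarith)
  set α : ℝ := t₀ / T with hαdef
  have hα0 : 0 ≤ α := div_nonneg ht0 hT.le
  have hα1 : α < 1 := (div_lt_one hT).2 (Real.log_lt_log (by linarith) (by linarith))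
  -- mean bounds on the two circles
  have hmemcirc : ∀ (s : ℝ), 0 < s → 1 - ρ ≤ s → s ≤ 1 + ρ → ∀ θ : ℝ,
      ((s:ℂ) * Complex.exp ((θ:ℂ) * Complex.I)) ∈ A ∧
        ‖(s:ℂ) * Complex.exp ((θ:ℂ) * Complex.I)‖ = s := by
    intro s hs hs1 hs2 θ
    have habs : ‖(s:ℂ) * Complex.exp ((θ:ℂ) * Complex.I)‖ = s := by
      rw [norm_mul, Complex.norm_exp_ofReal_mul_I, mul_one, Complex.norm_real, Real.norm_eq_abs, abs_of_pos hs]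
    exact ⟨⟨by rw [habs]; exact hs1, by rw [habs]; exact hs2⟩, habs⟩
  have hMγ : 2*Real.pi*γ ≤ cm v (1 + y₀) := by
    have : (∫ _θ in (0:ℝ)..(2*Real.pi), γ) ≤ ∫ θ in (0:ℝ)..(2*Real.pi),
        v ((((1+y₀):ℝ):ℂ) * Complex.exp ((θ:ℂ) * Complex.I)) := by
      apply intervalIntegral.integral_mono_on hπ.le intervalIntegrable_const
        (((cont_inner v hv).comp (by fun_prop : Continuous fun θ:ℝ => ((1+y₀ : ℝ), θ))).intervalIntegrable _ _)
      intro θ _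
      obtain ⟨hmem, habs⟩ := hmemcirc (1+y₀) (by linarith) (by linarith) (by linarith) θ
      simp only [Function.comp_apply, Function.uncurry_apply_pair]
      rw [hveq _ hmem]
      exact hγ _ habs
    rw [intervalIntegral.integral_const, smul_eq_mul, sub_zero] at this
    exact this.trans_eq rfl
  have hMS : cm v (1 + ρ) ≤ 2*Real.pi*S := by
    have : (∫ θ in (0:ℝ)..(2*Real.pi),
        v ((((1+ρ):ℝ):ℂ) * Complex.exp ((θ:ℂ) * Complex.I))) ≤ ∫ _θ in (0:ℝ)..(2*Real.pi), S := by
      apply intervalIntegral.integral_mono_on hπ.le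
        (((cont_inner v hv).comp (by fun_prop : Continuous fun θ:ℝ => ((1+ρ : ℝ), θ))).intervalIntegrable _ _)
        intervalIntegrable_const
      intro θ _
      obtain ⟨hmem, habs⟩ := hmemcirc (1+ρ) (by linarith) (by linarith) (by linarith) θ
      simp only [Function.comp_apply, Function.uncurry_apply_pair]
      rw [hveq _ hmem]
      exact hS _ habs
    rw [intervalIntegral.integral_const, smul_eq_mul, sub_zero] at this
    exact this.trans_eq rfl
  -- convexity
  have hconv := cm_convex v hv hρ hsubA ht0 htT
  rw [Real.exp_log (by linarith : (0:ℝ) < 1 + y₀)] at hconv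
  -- identify cm v 1 with the goal integral
  set I₀ : ℝ := ∫ x in (0:ℝ)..1, u (Complex.exp (2 * Real.pi * x * Complex.I)) with hI₀def
  have hcm1 : cm v 1 = ∫ θ in (0:ℝ)..(2*Real.pi), u (Complex.exp ((θ:ℂ) * Complex.I)) := by
    apply intervalIntegral.integral_congr
    intro θ _
    obtain ⟨hmem, _⟩ := hmemcirc 1 one_pos (by linarith) (by linarith) θ
    show v (((1:ℝ):ℂ) * Complex.exp ((θ:ℂ) * Complex.I)) = u (Complex.exp ((θ:ℂ) * Complex.I))
    rw [show (((1:ℝ)):ℂ) * Complex.exp ((θ:ℂ) * Complex.I)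
        = Complex.exp ((θ:ℂ) * Complex.I) from by push_cast; ring] at hmem ⊢
    exact hveq _ hmem
  have hsubst : I₀ = (2*Real.pi)⁻¹ * ∫ θ in (0:ℝ)..(2*Real.pi),
      u (Complex.exp ((θ:ℂ) * Complex.I)) := by
    calc I₀ = ∫ x in (0:ℝ)..1, u (Complex.exp (((2*Real.pi*x : ℝ):ℂ) * Complex.I)) := by
          apply intervalIntegral.integral_congr
          intro x _
          show u (Complex.exp (2 * (Real.pi:ℂ) * (x:ℂ) * Complex.I))
            = u (Complex.exp (((2*Real.pi*x : ℝ):ℂ) * Complex.I))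
          rw [show 2 * (Real.pi:ℂ) * (x:ℂ) * Complex.I
            = ((2*Real.pi*x : ℝ):ℂ) * Complex.I from by push_cast; ring]
      _ = (2*Real.pi)⁻¹ • ∫ θ in (2*Real.pi*0)..(2*Real.pi*1), u (Complex.exp ((θ:ℂ) * Complex.I)) :=
          intervalIntegral.integral_comp_mul_left
            (fun θ : ℝ => u (Complex.exp ((θ:ℂ) * Complex.I)))
            (by positivity : (2*Real.pi:ℝ) ≠ 0)
      _ = (2*Real.pi)⁻¹ * ∫ θ in (0:ℝ)..(2*Real.pi), u (Complex.exp ((θ:ℂ) * Complex.I)) := by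
          rw [mul_zero, mul_one, smul_eq_mul]
  have hI : cm v 1 = 2*Real.pi*I₀ := by
    rw [hcm1, hsubst]
    rw [← mul_assoc, mul_inv_cancel₀ hπ.ne', one_mul]
  -- final arithmetic
  have hprod : α * cm v (1+ρ) ≤ α * (2*Real.pi*S) := mul_le_mul_of_nonneg_left hMS hα0
  rw [mul_sub] at hconv
  have key : 2*Real.pi*γ ≤ (2*Real.pi) * ((1-α)*I₀ + α*S) := by
    rw [hI] at hconv
    nlinarith [hMγ, hconv, hprod]
  have hdiv : γ ≤ (1-α)*I₀ + α*S := (mul_le_mul_iff_of_pos_left hπ).1 key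
  rw [div_le_iff₀ (by linarith : (0:ℝ) < 1 - α)]
  nlinarith [hdiv]
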